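/- For positive reals r, s, u, v with r ≠ s and u ≠ v, if ln(r/s)/ln(u/v) > 1, then the function P(t) = (r^t - s^t)/(u^t - v^t) for t ≠ 0, with P(0) = (ln r - ln s)/(ln u - ln v), is logarithmically convex on ℝ; if 0 < ln(r/s)/ln(u/v) < 1, it is logarithmically concave on ℝ. -/

import Mathlib

section Stmt17Aux
open Real Set Filter

lemma aux_sinh_le (x : ℝ) (hx : 0 ≤ x) : Real.sinh x ≤ x * Real.cosh x := by
  have h : MonotoneOn (fun x : ℝ => x * Real.cosh x - Real.sinh x) (Ici 0) := by
    apply monotoneOn_of_deriv_nonneg (convex_Ici 0)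
    · fun_prop
    · intro y hy
      exact (((hasDerivAt_id' y).mul (Real.hasDerivAt_cosh y)).sub (Real.hasDerivAt_sinh y)).differentiableAt.differentiableWithinAt
    · intro y hy
      rw [interior_Ici, mem_Ioi] at hy
      have hd : deriv (fun x : ℝ => x * Real.cosh x - Real.sinh x) y = y * Real.sinh y := by
        have := (show HasDerivAt (fun x : ℝ => x * Real.cosh x - Real.sinh x) _ y from (((hasDerivAt_id' y).mul (Real.hasDerivAt_cosh y)).sub (Real.hasDerivAt_sinh y))).deriv
        rw [this]; ring
      rw [hd]
      exact mul_nonneg hy.le (Real.sinh_nonneg_iff.2 hy.le)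
  have := h (self_mem_Ici (a := (0:ℝ))) hx hx
  simp at this
  linarith

lemma aux_sinh_div_mono {x y : ℝ} (hx : 0 < x) (hxy : x ≤ y) :
    Real.sinh x / x ≤ Real.sinh y / y := by
  have h : MonotoneOn (fun x : ℝ => Real.sinh x / x) (Ioi 0) := by
    apply monotoneOn_of_deriv_nonneg (convex_Ioi 0)
    · apply ContinuousOn.div (by fun_prop) (by fun_prop)
      intro z hz; exact (mem_Ioi.1 hz).ne'
    · intro z hz
      rw [interior_Ioi, mem_Ioi] at hz
      exact ((Real.hasDerivAt_sinh z).div (hasDerivAt_id' z) hz.ne').differentiableAt.differentiableWithinAt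
    · intro z hz
      rw [interior_Ioi, mem_Ioi] at hz
      rw [(show HasDerivAt (fun x : ℝ => Real.sinh x / x) _ z from ((Real.hasDerivAt_sinh z).div (hasDerivAt_id' z) hz.ne')).deriv]
      have h1 := aux_sinh_le z hz.le
      have h2 : (0:ℝ) < z ^ 2 := by positivity
      rw [div_nonneg_iff]
      left
      constructor
      · nlinarith
      · positivity
  exact h (mem_Ioi.2 hx) (mem_Ioi.2 (lt_of_lt_of_le hx hxy)) hxy


lemma glue_convex {f : ℝ → ℝ} {m : ℝ} (h1 : ConvexOn ℝ (Iic 0) f) (h2 : ConvexOn ℝ (Ici 0) f)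
    (hl : ∀ t : ℝ, f 0 + m * t ≤ f t) : ConvexOn ℝ univ f := by
  have key : ∀ x y la mu : ℝ, x ≤ y → 0 ≤ la → 0 ≤ mu → la + mu = 1 →
      f (la * x + mu * y) ≤ la * f x + mu * f y := by
    intro x y la mu hxy hla hmu hsum
    rcases le_or_gt 0 x with hx | hx
    · exact h2.2 (mem_Ici.2 hx) (mem_Ici.2 (hx.trans hxy)) hla hmu hsum
    rcases le_or_gt y 0 with hy | hy
    · exact h1.2 (mem_Iic.2 (hxy.trans hy)) (mem_Iic.2 hy) hla hmu hsum
    -- x < 0 < y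
    have hmu' : mu = 1 - la := by linarith
    subst hmu'
    have hla1 : la ≤ 1 := by linarith
    have hyx : 0 < y - x := by linarith
    have h0 : f 0 ≤ (y/(y-x)) * f x + (-x/(y-x)) * f y := by
      have l1 := hl x
      have l2 := hl y
      have hp0 : (0:ℝ) ≤ y/(y-x) := by positivity
      have hq0 : (0:ℝ) ≤ -x/(y-x) := div_nonneg (by linarith) hyx.le
      have e1 : (y/(y-x)) * (f 0 + m*x) + (-x/(y-x)) * (f 0 + m*y) = f 0 := by
        field_simp
        ring
      nlinarith [mul_le_mul_of_nonneg_left l1 hp0, mul_le_mul_of_nonneg_left l2 hq0]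
    rcases le_or_gt 0 (la * x + (1-la) * y) with hz0 | hz0
    · have hth0 : 0 ≤ (la * x + (1-la) * y) / y := div_nonneg hz0 hy.le
      have hzy : la * x + (1-la) * y ≤ y := by nlinarith
      have hth1 : (la * x + (1-la) * y) / y ≤ 1 := (div_le_one hy).2 hzy
      have hc := h2.2 (mem_Ici.2 (le_refl (0:ℝ))) (mem_Ici.2 hy.le)
        (sub_nonneg.2 hth1) hth0 (by ring)
      simp only [smul_eq_mul, mul_zero, zero_add] at hc
      rw [div_mul_cancel₀ _ hy.ne'] at hc
      calc f (la * x + (1-la) * y)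
          ≤ (1 - (la * x + (1-la) * y) / y) * f 0 + ((la * x + (1-la) * y) / y) * f y := hc
        _ ≤ (1 - (la * x + (1-la) * y) / y) * ((y/(y-x)) * f x + (-x/(y-x)) * f y)
              + ((la * x + (1-la) * y) / y) * f y := by
            have := mul_le_mul_of_nonneg_left h0 (sub_nonneg.2 hth1)
            linarith
        _ = la * f x + (1-la) * f y := by
            field_simp
            ring
    · have hth0 : 0 ≤ (la * x + (1-la) * y) / x := div_nonneg_of_nonpos hz0.le hx.le
      have hzx : x ≤ la * x + (1-la) * y := by nlinarith
      have hth1 : (la * x + (1-la) * y) / x ≤ 1 := by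
        rw [div_le_one_iff]
        exact Or.inr (Or.inr ⟨hx, hzx⟩)
      have hc := h1.2 (mem_Iic.2 hx.le) (mem_Iic.2 (le_refl (0:ℝ)))
        hth0 (sub_nonneg.2 hth1) (by ring)
      simp only [smul_eq_mul, mul_zero, add_zero] at hc
      rw [div_mul_cancel₀ _ hx.ne] at hc
      calc f (la * x + (1-la) * y)
          ≤ ((la * x + (1-la) * y) / x) * f x + (1 - (la * x + (1-la) * y) / x) * f 0 := hc
        _ ≤ ((la * x + (1-la) * y) / x) * f x
              + (1 - (la * x + (1-la) * y) / x) * ((y/(y-x)) * f x + (-x/(y-x)) * f y) := by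
            have := mul_le_mul_of_nonneg_left h0 (sub_nonneg.2 hth1)
            linarith
        _ = la * f x + (1-la) * f y := by
            field_simp [hx.ne]
            ring
  refine ⟨convex_univ, fun x _ y _ la mu hla hmu hsum => ?_⟩
  rcases le_total x y with h | h
  · exact key x y la mu h hla hmu hsum
  · have h' := key y x mu la h hmu hla (by linarith)
    calc f (la • x + mu • y) = f (mu * y + la * x) := by
          rw [smul_eq_mul, smul_eq_mul, add_comm]
      _ ≤ mu * f y + la * f x := h'
      _ = la * f x + mu * f y := by ring


section helpers
-- derivative helpers
lemma hasDerivAt_log_sinh (γ x : ℝ) (h : Real.sinh (γ*x) ≠ 0) :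
    HasDerivAt (fun t => Real.log (Real.sinh (γ*t))) (γ * Real.cosh (γ*x) / Real.sinh (γ*x)) x := by
  have h1 : HasDerivAt (fun t : ℝ => γ*t) γ x := by
    simpa using (hasDerivAt_id x).const_mul γ
  have h2 : HasDerivAt (fun t => Real.sinh (γ*t)) (Real.cosh (γ*x) * γ) x :=
    (Real.hasDerivAt_sinh (γ*x)).comp x h1
  have := h2.log h
  convert this using 1
  ring

lemma hasDerivAt_coth (γ x : ℝ) (h : Real.sinh (γ*x) ≠ 0) :
    HasDerivAt (fun t => γ * Real.cosh (γ*t) / Real.sinh (γ*t)) (-(γ^2 / Real.sinh (γ*x)^2)) x := by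
  have h1 : HasDerivAt (fun t : ℝ => γ*t) γ x := by
    simpa using (hasDerivAt_id x).const_mul γ
  have h2 : HasDerivAt (fun t => Real.sinh (γ*t)) (Real.cosh (γ*x) * γ) x :=
    (Real.hasDerivAt_sinh (γ*x)).comp x h1
  have h3 : HasDerivAt (fun t => Real.cosh (γ*t)) (Real.sinh (γ*x) * γ) x :=
    (Real.hasDerivAt_cosh (γ*x)).comp x h1
  have h4 : HasDerivAt (fun t => γ * Real.cosh (γ*t)) (γ * (Real.sinh (γ*x) * γ)) x :=
    h3.const_mul γ
  have h5 : HasDerivAt (fun t => γ * Real.cosh (γ*t) / Real.sinh (γ*t)) _ x := h4.div h2 h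
  convert h5 using 1
  have hnum : γ * (Real.sinh (γ*x) * γ) * Real.sinh (γ*x) - γ * Real.cosh (γ*x) * (Real.cosh (γ*x) * γ)
      = -(γ^2) := by nlinarith [Real.cosh_sq (γ*x)]
  rw [hnum, neg_div]
end helpers


set_option maxHeartbeats 1000000 in
lemma main_convex (r s u v : ℝ) (hr : 0 < r) (hs : 0 < s) (hu : 0 < u) (hv : 0 < v)
    (hsr : s < r) (hvu : v < u)
    (hK : 1 < (Real.log r - Real.log s) / (Real.log u - Real.log v)) :
    ConvexOn ℝ univ (fun t : ℝ => Real.log (if t = 0 then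
      (Real.log r - Real.log s)/(Real.log u - Real.log v)
      else (r ^ t - s ^ t) / (u ^ t - v ^ t))) := by
  set a := Real.log r with ha
  set b := Real.log s with hb
  set c := Real.log u with hc
  set d := Real.log v with hd
  have hab : b < a := Real.log_lt_log hs hsr
  have hcd : d < c := Real.log_lt_log hv hvu
  set α : ℝ := (a - b) / 2 with hα_def
  set β : ℝ := (c - d) / 2 with hβ_def
  have hα : 0 < α := by simp only [hα_def]; linarith
  have hβ : 0 < β := by simp only [hβ_def]; linarith
  have hβα : β < α := by
    have := (one_lt_div (by linarith : (0:ℝ) < c - d)).1 hK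
    simp only [hα_def, hβ_def]; linarith
  set m : ℝ := (a + b)/2 - (c + d)/2 with hm_def
  set F : ℝ → ℝ := fun t : ℝ => Real.log (if t = 0 then (a - b)/(c - d)
      else (r ^ t - s ^ t) / (u ^ t - v ^ t)) with hF_def
  -- basic nonvanishing
  have hsinh_ne : ∀ (γ t : ℝ), γ ≠ 0 → t ≠ 0 → Real.sinh (γ*t) ≠ 0 := by
    intro γ t hγ ht
    rw [Ne, Real.sinh_eq_zero]
    exact mul_ne_zero hγ ht
  -- decomposition of exp differences
  have hexp : ∀ (p q t : ℝ), Real.exp (p*t) - Real.exp (q*t)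
      = Real.exp (((p+q)/2)*t) * (2 * Real.sinh (((p-q)/2)*t)) := by
    intro p q t
    rw [Real.sinh_eq]
    have h2 : 2 * ((Real.exp (((p-q)/2)*t) - Real.exp (-(((p-q)/2)*t)))/2)
        = Real.exp (((p-q)/2)*t) - Real.exp (-(((p-q)/2)*t)) := by ring
    rw [h2, mul_sub, ← Real.exp_add, ← Real.exp_add]
    rw [show ((p+q)/2)*t + ((p-q)/2)*t = p*t by ring,
        show ((p+q)/2)*t + -(((p-q)/2)*t) = q*t by ring]
  -- the formula for F away from 0
  have hF : ∀ t : ℝ, t ≠ 0 → F t = m * t + Real.log (Real.sinh (α*t)) - Real.log (Real.sinh (β*t)) := by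
    intro t ht
    have hrw : r ^ t - s ^ t = Real.exp (((a+b)/2)*t) * (2 * Real.sinh (α*t)) := by
      rw [Real.rpow_def_of_pos hr, Real.rpow_def_of_pos hs, hexp a b t]
    have hrw2 : u ^ t - v ^ t = Real.exp (((c+d)/2)*t) * (2 * Real.sinh (β*t)) := by
      rw [Real.rpow_def_of_pos hu, Real.rpow_def_of_pos hv, hexp c d t]
    have hsa := hsinh_ne α t hα.ne' ht
    have hsb := hsinh_ne β t hβ.ne' ht
    have hnum_ne : Real.exp (((a+b)/2)*t) * (2 * Real.sinh (α*t)) ≠ 0 :=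
      mul_ne_zero (Real.exp_ne_zero _) (mul_ne_zero two_ne_zero hsa)
    have hden_ne : Real.exp (((c+d)/2)*t) * (2 * Real.sinh (β*t)) ≠ 0 :=
      mul_ne_zero (Real.exp_ne_zero _) (mul_ne_zero two_ne_zero hsb)
    simp only [hF_def, if_neg ht, hrw, hrw2]
    rw [Real.log_div hnum_ne hden_ne,
        Real.log_mul (Real.exp_ne_zero _) (mul_ne_zero two_ne_zero hsa),
        Real.log_mul (Real.exp_ne_zero _) (mul_ne_zero two_ne_zero hsb),
        Real.log_mul two_ne_zero hsa, Real.log_mul two_ne_zero hsb,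
        Real.log_exp, Real.log_exp]
    simp only [hm_def]
    ring
  have hF0 : F 0 = Real.log (α/β) := by
    have hcd' : c - d ≠ 0 := by linarith
    have hq : (a-b)/(c-d) = α/β := by
      simp only [hα_def, hβ_def]
      rw [div_div_div_cancel_right₀ (two_ne_zero)]
    simp only [hF_def, if_pos rfl, hq, if_true, eq_self_iff_true]
  -- key ratio inequality
  have hratio : ∀ t : ℝ, t ≠ 0 → α / β ≤ Real.sinh (α*t) / Real.sinh (β*t) := by
    intro t ht
    have hw : 0 < |t| := abs_pos.2 ht
    have key : α * Real.sinh (β*|t|) ≤ β * Real.sinh (α*|t|) := by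
      have h := aux_sinh_div_mono (mul_pos hβ hw)
        (mul_le_mul_of_nonneg_right hβα.le hw.le)
      rw [div_le_div_iff₀ (mul_pos hβ hw) (mul_pos hα hw)] at h
      nlinarith [h, hw]
    have habs : Real.sinh (α*t) / Real.sinh (β*t) = Real.sinh (α*|t|) / Real.sinh (β*|t|) := by
      rcases le_or_gt 0 t with h | h
      · rw [abs_of_nonneg h]
      · rw [abs_of_neg h, mul_neg, mul_neg, Real.sinh_neg, Real.sinh_neg, neg_div_neg_eq]
    rw [habs, div_le_div_iff₀ hβ (Real.sinh_pos_iff.2 (mul_pos hβ hw))]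
    nlinarith [key]
  -- the supporting line
  have hsupp : ∀ t : ℝ, F 0 + m * t ≤ F t := by
    intro t
    rcases eq_or_ne t 0 with rfl | ht
    · simp
    · rw [hF t ht, hF0]
      have hsa := hsinh_ne α t hα.ne' ht
      have hsb := hsinh_ne β t hβ.ne' ht
      have h1 : Real.log (α/β) ≤ Real.log (Real.sinh (α*t) / Real.sinh (β*t)) :=
        Real.log_le_log (div_pos hα hβ) (hratio t ht)
      rw [Real.log_div hsa hsb] at h1
      linarith
  -- G1: first derivative of F away from 0
  set G1 : ℝ → ℝ := fun x => m + α * Real.cosh (α*x) / Real.sinh (α*x)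
      - β * Real.cosh (β*x) / Real.sinh (β*x) with hG1_def
  have hFd : ∀ x : ℝ, x ≠ 0 → HasDerivAt F (G1 x) x := by
    intro x hx
    have hsa := hsinh_ne α x hα.ne' hx
    have hsb := hsinh_ne β x hβ.ne' hx
    have hG : HasDerivAt (fun t => m * t + Real.log (Real.sinh (α*t)) - Real.log (Real.sinh (β*t)))
        (G1 x) x := by
      have h1 : HasDerivAt (fun t : ℝ => m*t) m x := by
        simpa using (hasDerivAt_id x).const_mul m
      exact (h1.add (hasDerivAt_log_sinh α x hsa)).sub (hasDerivAt_log_sinh β x hsb)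
    apply hG.congr_of_eventuallyEq
    filter_upwards [isOpen_ne.mem_nhds hx] with t ht
    exact hF t ht
  have hev_deriv : ∀ x : ℝ, x ≠ 0 → deriv F =ᶠ[nhds x] G1 := by
    intro x hx
    filter_upwards [isOpen_ne.mem_nhds hx] with t ht
    exact (hFd t ht).deriv
  have hG1d : ∀ x : ℝ, x ≠ 0 → HasDerivAt G1
      (-(α^2 / Real.sinh (α*x)^2) - -(β^2 / Real.sinh (β*x)^2)) x := by
    intro x hx
    have hsa := hsinh_ne α x hα.ne' hx
    have hsb := hsinh_ne β x hβ.ne' hx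
    have := (show HasDerivAt G1 _ x from (((hasDerivAt_const x m).add (hasDerivAt_coth α x hsa)).sub
      (hasDerivAt_coth β x hsb)))
    simpa using this
  -- nonnegativity of the second derivative
  have hsecond : ∀ x : ℝ, x ≠ 0 → 0 ≤ -(α^2 / Real.sinh (α*x)^2) - -(β^2 / Real.sinh (β*x)^2) := by
    intro x hx
    have hw : 0 < |x| := abs_pos.2 hx
    have key : α * Real.sinh (β*|x|) ≤ β * Real.sinh (α*|x|) := by
      have h := aux_sinh_div_mono (mul_pos hβ hw)
        (mul_le_mul_of_nonneg_right hβα.le hw.le)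
      rw [div_le_div_iff₀ (mul_pos hβ hw) (mul_pos hα hw)] at h
      nlinarith [h, hw]
    have hb0 : 0 < Real.sinh (β*|x|) := Real.sinh_pos_iff.2 (mul_pos hβ hw)
    have ha0 : 0 < Real.sinh (α*|x|) := Real.sinh_pos_iff.2 (mul_pos hα hw)
    have hsq : α^2 * Real.sinh (β*|x|)^2 ≤ β^2 * Real.sinh (α*|x|)^2 := by
      nlinarith [mul_self_le_mul_self (by positivity : (0:ℝ) ≤ α * Real.sinh (β*|x|)) key]
    have hsqa : Real.sinh (α*x)^2 = Real.sinh (α*|x|)^2 := by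
      rw [← sq_abs (Real.sinh (α*x)), Real.abs_sinh, abs_mul, abs_of_pos hα]
    have hsqb : Real.sinh (β*x)^2 = Real.sinh (β*|x|)^2 := by
      rw [← sq_abs (Real.sinh (β*x)), Real.abs_sinh, abs_mul, abs_of_pos hβ]
    rw [hsqa, hsqb, sub_nonneg, neg_le_neg_iff,
        div_le_div_iff₀ (by positivity) (by positivity)]
    nlinarith [hsq, sq_nonneg (Real.sinh (α*|x|)), sq_nonneg (Real.sinh (β*|x|))]
  -- continuity of F on closed half-lines
  have hcontAt : ∀ x : ℝ, x ≠ 0 → ContinuousAt F x := by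
    intro x hx
    have hG : ContinuousAt (fun t => m * t + Real.log (Real.sinh (α*t)) - Real.log (Real.sinh (β*t))) x := by
      have hs1 : ContinuousAt (fun t : ℝ => Real.sinh (α * t)) x := by fun_prop
      have hs2 : ContinuousAt (fun t : ℝ => Real.sinh (β * t)) x := by fun_prop
      have h1 : ContinuousAt (fun t : ℝ => Real.log (Real.sinh (α * t))) x :=
        ContinuousAt.comp (x := x) (g := Real.log) (f := fun t : ℝ => Real.sinh (α * t))
          (Real.continuousAt_log (hsinh_ne α x hα.ne' hx)) hs1
      have h2 : ContinuousAt (fun t : ℝ => Real.log (Real.sinh (β * t))) x :=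
        ContinuousAt.comp (x := x) (g := Real.log) (f := fun t : ℝ => Real.sinh (β * t))
          (Real.continuousAt_log (hsinh_ne β x hβ.ne' hx)) hs2
      have hm1 : ContinuousAt (fun t : ℝ => m * t) x := by fun_prop
      exact (hm1.add h1).sub h2
    apply hG.congr
    filter_upwards [isOpen_ne.mem_nhds hx] with t ht
    exact (hF t ht).symm
  have hlim : Tendsto F (nhdsWithin 0 {(0:ℝ)}ᶜ) (nhds (F 0)) := by
    have hda : HasDerivAt (fun t : ℝ => r ^ t - s ^ t) (a - b) 0 := by
      have h1 : HasDerivAt (fun t : ℝ => Real.exp (a*t) - Real.exp (b*t)) (a - b) 0 := by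
        have ha' : HasDerivAt (fun t : ℝ => Real.exp (a*t)) (Real.exp (a*0) * a) 0 :=
          (Real.hasDerivAt_exp (a*0)).comp 0 (by simpa using (hasDerivAt_id (0:ℝ)).const_mul a)
        have hb' : HasDerivAt (fun t : ℝ => Real.exp (b*t)) (Real.exp (b*0) * b) 0 :=
          (Real.hasDerivAt_exp (b*0)).comp 0 (by simpa using (hasDerivAt_id (0:ℝ)).const_mul b)
        have := (show HasDerivAt (fun t : ℝ => Real.exp (a*t) - Real.exp (b*t)) _ 0 from ha'.sub hb')
        simpa using this
      have : (fun t : ℝ => r ^ t - s ^ t) = fun t : ℝ => Real.exp (a*t) - Real.exp (b*t) := by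
        funext t
        rw [Real.rpow_def_of_pos hr, Real.rpow_def_of_pos hs]
      rw [this]
      exact h1
    have hdc : HasDerivAt (fun t : ℝ => u ^ t - v ^ t) (c - d) 0 := by
      have h1 : HasDerivAt (fun t : ℝ => Real.exp (c*t) - Real.exp (d*t)) (c - d) 0 := by
        have hc' : HasDerivAt (fun t : ℝ => Real.exp (c*t)) (Real.exp (c*0) * c) 0 :=
          (Real.hasDerivAt_exp (c*0)).comp 0 (by simpa using (hasDerivAt_id (0:ℝ)).const_mul c)
        have hd' : HasDerivAt (fun t : ℝ => Real.exp (d*t)) (Real.exp (d*0) * d) 0 :=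
          (Real.hasDerivAt_exp (d*0)).comp 0 (by simpa using (hasDerivAt_id (0:ℝ)).const_mul d)
        have := (show HasDerivAt (fun t : ℝ => Real.exp (c*t) - Real.exp (d*t)) _ 0 from hc'.sub hd')
        simpa using this
      have : (fun t : ℝ => u ^ t - v ^ t) = fun t : ℝ => Real.exp (c*t) - Real.exp (d*t) := by
        funext t
        rw [Real.rpow_def_of_pos hu, Real.rpow_def_of_pos hv]
      rw [this]
      exact h1
    have hta : Tendsto (fun t : ℝ => (r ^ t - s ^ t)/t) (nhdsWithin 0 {(0:ℝ)}ᶜ) (nhds (a - b)) := by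
      have := hasDerivAt_iff_tendsto_slope.1 hda
      apply this.congr'
      filter_upwards [self_mem_nhdsWithin] with t ht
      simp [slope_def_field, Real.rpow_zero]
    have htc : Tendsto (fun t : ℝ => (u ^ t - v ^ t)/t) (nhdsWithin 0 {(0:ℝ)}ᶜ) (nhds (c - d)) := by
      have := hasDerivAt_iff_tendsto_slope.1 hdc
      apply this.congr'
      filter_upwards [self_mem_nhdsWithin] with t ht
      simp [slope_def_field, Real.rpow_zero]
    have hP : Tendsto (fun t : ℝ => (r ^ t - s ^ t)/(u ^ t - v ^ t)) (nhdsWithin 0 {(0:ℝ)}ᶜ)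
        (nhds ((a-b)/(c-d))) := by
      have h := hta.div htc (by linarith : c - d ≠ 0)
      apply h.congr'
      filter_upwards [self_mem_nhdsWithin] with t ht
      simp only [Pi.div_apply]
      rw [div_div_div_cancel_right₀ (ht : t ≠ 0)]
    have hK0 : (a-b)/(c-d) ≠ 0 := by positivity
    have hlog := hP.log hK0
    have : Tendsto F (nhdsWithin 0 {(0:ℝ)}ᶜ) (nhds (Real.log ((a-b)/(c-d)))) := by
      apply hlog.congr'
      filter_upwards [self_mem_nhdsWithin] with t ht
      simp only [hF_def, if_neg (by exact ht : t ≠ 0)]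
    simpa only [hF_def, if_pos rfl, if_true] using this
  have hcont_Ici : ContinuousOn F (Ici 0) := by
    intro x hx
    rcases eq_or_ne x 0 with rfl | hx0
    · rw [← continuousWithinAt_Ioi_iff_Ici]
      exact hlim.mono_left (nhdsWithin_mono 0 (fun y hy => ne_of_gt hy))
    · exact (hcontAt x hx0).continuousWithinAt
  have hcont_Iic : ContinuousOn F (Iic 0) := by
    intro x hx
    rcases eq_or_ne x 0 with rfl | hx0
    · rw [← continuousWithinAt_Iio_iff_Iic]
      exact hlim.mono_left (nhdsWithin_mono 0 (fun y hy => ne_of_lt hy))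
    · exact (hcontAt x hx0).continuousWithinAt
  -- convexity on each half line
  have hconv : ∀ (D : Set ℝ), Convex ℝ D → ContinuousOn F D → (∀ x ∈ interior D, x ≠ 0) →
      ConvexOn ℝ D F := by
    intro D hD hcont hne
    apply convexOn_of_deriv2_nonneg hD hcont
    · intro x hx
      exact (hFd x (hne x hx)).differentiableAt.differentiableWithinAt
    · intro x hx
      have hx0 := hne x hx
      apply DifferentiableAt.differentiableWithinAt
      rw [(hev_deriv x hx0).differentiableAt_iff]
      exact (hG1d x hx0).differentiableAt
    · intro x hx
      have hx0 := hne x hx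
      have h1 : deriv^[2] F x = deriv (deriv F) x := by
        simp [Function.iterate_succ_apply']
      rw [h1, (hev_deriv x hx0).deriv_eq, (hG1d x hx0).deriv]
      exact hsecond x hx0
  have h2 : ConvexOn ℝ (Ici (0:ℝ)) F :=
    hconv _ (convex_Ici 0) hcont_Ici (by rw [interior_Ici]; exact fun x hx => ne_of_gt hx)
  have h1 : ConvexOn ℝ (Iic (0:ℝ)) F :=
    hconv _ (convex_Iic 0) hcont_Iic (by rw [interior_Iic]; exact fun x hx => ne_of_lt hx)
  exact glue_convex h1 h2 hsupp


lemma convex_case (r s u v : ℝ) (hr : 0 < r) (hs : 0 < s) (hu : 0 < u) (hv : 0 < v)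
    (hrs : r ≠ s)
    (hK : 1 < (Real.log r - Real.log s) / (Real.log u - Real.log v)) :
    ConvexOn ℝ univ (fun t : ℝ => Real.log (if t = 0 then
      (Real.log r - Real.log s)/(Real.log u - Real.log v)
      else (r ^ t - s ^ t) / (u ^ t - v ^ t))) := by
  rcases hrs.lt_or_gt with h1 | h1
  · -- r < s, hence u < v, swap roles
    have hnum : Real.log r - Real.log s < 0 := sub_neg.2 (Real.log_lt_log hr h1)
    have hden : Real.log u - Real.log v < 0 := by
      by_contra h
      push_neg at h
      rcases h.eq_or_lt with he | hlt
      · rw [← he, div_zero] at hK; linarith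
      · have := div_neg_of_neg_of_pos hnum hlt; linarith
    have huv' : u < v := (Real.log_lt_log_iff hu hv).1 (by linarith)
    have hK' : 1 < (Real.log s - Real.log r) / (Real.log v - Real.log u) := by
      rw [show Real.log s - Real.log r = -(Real.log r - Real.log s) by ring,
          show Real.log v - Real.log u = -(Real.log u - Real.log v) by ring, neg_div_neg_eq]
      exact hK
    have hmain := main_convex s r v u hs hr hv hu h1 huv' hK'
    have hfun : (fun t : ℝ => Real.log (if t = 0 then
        (Real.log r - Real.log s)/(Real.log u - Real.log v)
        else (r ^ t - s ^ t) / (u ^ t - v ^ t)))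
        = (fun t : ℝ => Real.log (if t = 0 then
        (Real.log s - Real.log r)/(Real.log v - Real.log u)
        else (s ^ t - r ^ t) / (v ^ t - u ^ t))) := by
      funext t
      by_cases ht : t = 0
      · simp only [if_pos ht]
        congr 1
        rw [show Real.log s - Real.log r = -(Real.log r - Real.log s) by ring,
            show Real.log v - Real.log u = -(Real.log u - Real.log v) by ring, neg_div_neg_eq]
      · simp only [if_neg ht]
        congr 1
        rw [show s ^ t - r ^ t = -(r ^ t - s ^ t) by ring,
            show v ^ t - u ^ t = -(u ^ t - v ^ t) by ring, neg_div_neg_eq]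
    rw [hfun]
    exact hmain
  · -- s < r, hence v < u
    have hnum : 0 < Real.log r - Real.log s := sub_pos.2 (Real.log_lt_log hs h1)
    have hden : 0 < Real.log u - Real.log v := by
      by_contra h
      push_neg at h
      rcases h.eq_or_lt with he | hlt
      · rw [he, div_zero] at hK; linarith
      · have := div_neg_of_pos_of_neg hnum hlt; linarith
    have hvu' : v < u := (Real.log_lt_log_iff hv hu).1 (by linarith)
    exact main_convex r s u v hr hs hu hv h1 hvu' hK

theorem stmt17 (r s u v : ℝ) (hr : 0 < r) (hs : 0 < s) (hu : 0 < u) (hv : 0 < v) (hrs : r ≠ s) (huv : u ≠ v) :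
    (Real.log (r/s) / Real.log (u/v) > 1 → ConvexOn ℝ Set.univ (fun t => Real.log ((fun t : ℝ => if t = 0 then (Real.log r - Real.log s)/(Real.log u - Real.log v) else (r ^ t - s ^ t) / (u ^ t - v ^ t)) t))) ∧
    (0 < Real.log (r/s) / Real.log (u/v) ∧ Real.log (r/s) / Real.log (u/v) < 1 →
      ConcaveOn ℝ Set.univ (fun t => Real.log ((fun t : ℝ => if t = 0 then (Real.log r - Real.log s)/(Real.log u - Real.log v) else (r ^ t - s ^ t) / (u ^ t - v ^ t)) t))) := by
  have hlog : Real.log (r/s) / Real.log (u/v) = (Real.log r - Real.log s)/(Real.log u - Real.log v) := by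
    rw [Real.log_div hr.ne' hs.ne', Real.log_div hu.ne' hv.ne']
  constructor
  · intro hK
    rw [hlog] at hK
    exact convex_case r s u v hr hs hu hv hrs hK
  · rintro ⟨hK0, hK1⟩
    rw [hlog] at hK0 hK1
    have hK' : 1 < (Real.log u - Real.log v)/(Real.log r - Real.log s) := by
      have := (one_lt_inv₀ hK0).2 hK1
      rwa [inv_div] at this
    have hconv := convex_case u v r s hu hv hr hs huv hK'
    have hfun : (fun t : ℝ => Real.log (if t = 0 then
        (Real.log r - Real.log s)/(Real.log u - Real.log v)
        else (r ^ t - s ^ t) / (u ^ t - v ^ t)))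
        = -(fun t : ℝ => Real.log (if t = 0 then
        (Real.log u - Real.log v)/(Real.log r - Real.log s)
        else (u ^ t - v ^ t) / (r ^ t - s ^ t))) := by
      funext t
      show _ = -(Real.log _)
      rw [← Real.log_inv, apply_ite Inv.inv, inv_div, inv_div]
    show ConcaveOn ℝ univ (fun t : ℝ => Real.log (if t = 0 then
        (Real.log r - Real.log s)/(Real.log u - Real.log v)
        else (r ^ t - s ^ t) / (u ^ t - v ^ t)))
    rw [hfun]
    exact hconv.neg

end Stmt17Aux
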